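/- Let E be a topological graph with no singular vertices such that V_n is closed in E^0 for every n ≥ 1. Then Iso(Γ(E^∞,σ))° is closed in Γ(E^∞,σ). -/

import Mathlib

/-- A topological graph: vertex space `V`, edge space `E`, continuous range map `r`
and locally homeomorphic source map `s`. -/
structure TopGraph (V E : Type) [TopologicalSpace V] [TopologicalSpace E] where
  r : E → V
  s : E → V
  r_cont : Continuous r
  s_locHomeo : IsLocalHomeomorph s

namespace TopGraph

variable {V E : Type} [TopologicalSpace V] [TopologicalSpace E] (G : TopGraph V E)

/-- The predicate that `μ : Fin n → E` is a (finite) path. -/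
def IsPathFn {n : ℕ} (μ : Fin n → E) : Prop :=
  ∀ (i : ℕ) (h : i + 1 < n), G.s (μ ⟨i, Nat.lt_of_succ_lt h⟩) = G.r (μ ⟨i + 1, h⟩)

/-- The space `E^n` of paths of length `n`, with the subspace topology of the product. -/
def Path (n : ℕ) : Type := {μ : Fin n → E // G.IsPathFn μ}

instance (n : ℕ) : TopologicalSpace (G.Path n) :=
  inferInstanceAs (TopologicalSpace {μ : Fin n → E // G.IsPathFn μ})

/-- `r^n(μ) = r(μ₁)`. -/
def pathRange {n : ℕ} (hn : 0 < n) (μ : G.Path n) : V := G.r (μ.1 ⟨0, hn⟩)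

/-- `s^n(μ) = s(μₙ)`. -/
def pathSource {n : ℕ} (hn : 0 < n) (μ : G.Path n) : V :=
  G.s (μ.1 ⟨n - 1, Nat.sub_lt hn Nat.one_pos⟩)

/-- A cycle is a path whose range equals its source; its base point is its range. -/
def IsCycle {n : ℕ} (hn : 0 < n) (μ : G.Path n) : Prop :=
  G.pathRange hn μ = G.pathSource hn μ

/-- A path `μ ∈ E^n` has an entrance if some edge `e ≠ μᵢ` has `r(e) = r(μᵢ)`. -/
def HasEntrance {n : ℕ} (μ : G.Path n) : Prop :=
  ∃ (i : Fin n) (e : E), G.r e = G.r (μ.1 i) ∧ e ≠ μ.1 i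

theorem block_lt {n k : ℕ} (j : Fin k) (i : Fin n) : (j : ℕ) * n + (i : ℕ) < k * n := by
  have hi := i.2
  have hj := j.2
  calc (j : ℕ) * n + (i : ℕ) < ((j : ℕ) + 1) * n := by rw [Nat.add_mul, Nat.one_mul]; omega
    _ ≤ k * n := Nat.mul_le_mul (Nat.succ_le_of_lt hj) le_rfl

/-- The `j`-th block of length `n` of a path of length `k * n`. -/
def block {n k : ℕ} (α : G.Path (k * n)) (j : Fin k) : G.Path n :=
  ⟨fun i => α.1 ⟨(j : ℕ) * n + (i : ℕ), block_lt j i⟩,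
    fun i h => α.2 ((j : ℕ) * n + i) (block_lt j ⟨i + 1, h⟩)⟩

/-- `α ∈ kN` : every block of `α` lies in `N`. -/
def BlocksIn {n k : ℕ} (N : Set (G.Path n)) (α : G.Path (k * n)) : Prop :=
  ∀ j : Fin k, G.block α j ∈ N

/-- The set `B^n` of cycles of length `n` admitting `k ≥ 1` and an open neighbourhood `N`
satisfying conditions (1) and (2) of Notation 3.3. -/
def B (n : ℕ) (hn : 0 < n) : Set (G.Path n) :=
  {μ | G.IsCycle hn μ ∧
    ∃ (k : ℕ) (hk : 0 < k) (N : Set (G.Path n)), IsOpen N ∧ μ ∈ N ∧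
      (∀ α β : G.Path (k * n), G.BlocksIn N α → G.BlocksIn N β → α ≠ β →
        ¬ ∃ γ ∈ N, G.pathRange hn γ = G.pathSource (Nat.mul_pos hk hn) α ∧
          G.pathSource hn γ = G.pathSource (Nat.mul_pos hk hn) β) ∧
      (∀ α : G.Path (k * n), G.BlocksIn N α →
        ¬ ∃ γ ∈ N, G.IsCycle hn γ ∧ G.HasEntrance γ ∧
          G.pathRange hn γ = G.pathSource (Nat.mul_pos hk hn) α)}

/-- The infinite path space `E^∞`, with the subspace topology of the product. -/
def InfPath : Type := {x : ℕ → E // ∀ i : ℕ, G.s (x i) = G.r (x (i + 1))}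

instance : TopologicalSpace G.InfPath :=
  inferInstanceAs (TopologicalSpace {x : ℕ → E // ∀ i : ℕ, G.s (x i) = G.r (x (i + 1))})

/-- The one-sided shift on `E^∞`. -/
def shift (x : G.InfPath) : G.InfPath := ⟨fun i => x.1 (i + 1), fun i => x.2 (i + 1)⟩

/-- The segment `x_{a+1} ⋯ x_{a+len}` (0-indexed: edges `a, …, a+len-1`) of an infinite path. -/
def segment (x : G.InfPath) (a len : ℕ) : G.Path len :=
  ⟨fun i => x.1 (a + (i : ℕ)), fun i _ => x.2 (a + i)⟩

/-- The boundary path groupoid `Γ(E^∞, σ)` as a set. -/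
def Gamma : Type :=
  {g : G.InfPath × ℤ × G.InfPath //
    ∃ k l : ℕ, g.2.1 = (k : ℤ) - (l : ℤ) ∧ G.shift^[k] g.1 = G.shift^[l] g.2.2}

/-- Basic sets `U(U, W, k, l)` for the topology of `Γ(E^∞, σ)`. -/
def basicSet (U W : Set G.InfPath) (k l : ℕ) : Set G.Gamma :=
  {g | g.1.1 ∈ U ∧ g.1.2.2 ∈ W ∧ g.1.2.1 = (k : ℤ) - (l : ℤ) ∧
    G.shift^[k] g.1.1 = G.shift^[l] g.1.2.2}

/-- The topology on `Γ(E^∞, σ)` generated by the sets `U(U, W, k, l)` with `U, W` open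
and `σ^k`, `σ^l` injective on `U` resp. `W`. -/
instance : TopologicalSpace G.Gamma :=
  TopologicalSpace.generateFrom
    {S | ∃ (U W : Set G.InfPath) (k l : ℕ), IsOpen U ∧ IsOpen W ∧
      Set.InjOn (G.shift^[k]) U ∧ Set.InjOn (G.shift^[l]) W ∧ S = G.basicSet U W k l}

/-- The isotropy group bundle `Iso(Γ(E^∞, σ))`. -/
def isoSet : Set G.Gamma := {g | g.1.1 = g.1.2.2}

/-- The interior of the isotropy group bundle. -/
def isoInterior : Set G.Gamma := interior G.isoSet

/-- The set `E^0_fin` of finite receivers. -/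
def finRecv : Set V := {v | ∃ N : Set V, IsOpen N ∧ v ∈ N ∧ IsCompact (G.r ⁻¹' closure N)}

/-- The set `E^0_sce` of sources. -/
def sce : Set V := (closure (Set.range G.r))ᶜ

/-- The set `E^0_rg` of regular vertices. -/
def rg : Set V := G.finRecv \ closure G.sce

/-- The set `E^0_sg` of singular vertices. -/
def sg : Set V := G.rgᶜ

/-- The set `V_n` of vertices having an open neighbourhood consisting of base points of
cycles without entrances in `E^n`. -/
def Vset (n : ℕ) (hn : 0 < n) : Set V :=
  {v | ∃ W : Set V, IsOpen W ∧ v ∈ W ∧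
    ∀ w ∈ W, ∃ γ : G.Path n, G.IsCycle hn γ ∧ ¬ G.HasEntrance γ ∧ G.pathRange hn γ = w}

/-- `E` is topologically free if the set of base points of cycles without entrances has
empty interior. -/
def TopologicallyFree : Prop :=
  interior {v : V | ∃ (n : ℕ) (hn : 0 < n) (γ : G.Path n),
    G.IsCycle hn γ ∧ ¬ G.HasEntrance γ ∧ G.pathRange hn γ = v} = ∅

/-- The groupoid `Γ(E^∞, σ)` is essentially free if the set of units with trivial
isotropy is dense. -/
def EssentiallyFree : Prop :=
  Dense {x : G.InfPath | ∀ g : G.Gamma, g.1.1 = x → g.1.2.2 = x → g.1.2.1 = 0}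

end TopGraph

namespace TopGraph

variable {V E : Type} [TopologicalSpace V] [TopologicalSpace E] (G : TopGraph V E)

section Aux

lemma shift_coord (x : G.InfPath) (k i : ℕ) : (G.shift^[k] x).1 i = x.1 (i + k) := by
  induction k generalizing x with
  | zero => rfl
  | succ k ih =>
    rw [Function.iterate_succ_apply, ih]
    exact congrArg x.1 (by omega)

lemma infPath_ext {x y : G.InfPath} (h : ∀ i, x.1 i = y.1 i) : x = y :=
  Subtype.ext (funext h)

lemma shift_eq_iff {x y : G.InfPath} {k l : ℕ} :
    G.shift^[k] x = G.shift^[l] y ↔ ∀ i, x.1 (i + k) = y.1 (i + l) := by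
  constructor
  · intro h i
    rw [← G.shift_coord x k i, ← G.shift_coord y l i, h]
  · intro h
    apply G.infPath_ext
    intro i
    rw [G.shift_coord, G.shift_coord]
    exact h i

lemma continuous_coord (i : ℕ) : Continuous fun z : G.InfPath => z.1 i :=
  (continuous_apply i).comp continuous_subtype_val

lemma isOpen_cyl (S : ℕ → Set E) (hS : ∀ i, IsOpen (S i)) (m : ℕ) :
    IsOpen {z : G.InfPath | ∀ i < m, z.1 i ∈ S i} := by
  have : {z : G.InfPath | ∀ i < m, z.1 i ∈ S i}
      = ⋂ i ∈ Finset.range m, (fun z : G.InfPath => z.1 i) ⁻¹' S i := by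
    ext z
    simp [Finset.mem_range]
  rw [this]
  exact isOpen_biInter_finset fun i _ => (hS i).preimage (G.continuous_coord i)

lemma cyl_of_nhds {x : G.InfPath} {U : Set G.InfPath} (hU : U ∈ nhds x) :
    ∃ (M : ℕ) (O : ℕ → Set E), (∀ i, IsOpen (O i)) ∧ (∀ i, x.1 i ∈ O i) ∧
      {z : G.InfPath | ∀ i < M, z.1 i ∈ O i} ⊆ U := by
  replace hU := (mem_nhds_subtype {x : ℕ → E | ∀ i, G.s (x i) = G.r (x (i + 1))} x U).mp hU
  obtain ⟨T, hT, hTU⟩ := hU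
  rw [nhds_pi, Filter.mem_pi'] at hT
  obtain ⟨I, t, ht, htT⟩ := hT
  refine ⟨I.sup id + 1, fun i => if i ∈ I then interior (t i) else Set.univ, ?_, ?_, ?_⟩
  · intro i
    dsimp only
    split <;> [exact isOpen_interior; exact isOpen_univ]
  · intro i
    dsimp only
    split
    · exact mem_interior_iff_mem_nhds.2 (ht i)
    · trivial
  · intro z hz
    apply hTU
    apply htT
    intro i hi
    have hi' : i ∈ I := hi
    have hilt : i < I.sup id + 1 := Nat.lt_succ_of_le (Finset.le_sup (f := id) hi')
    have := hz i hilt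
    dsimp only at this
    rw [if_pos hi'] at this
    exact interior_subset this

lemma exists_inj_source (e : E) :
    ∃ S : Set E, IsOpen S ∧ e ∈ S ∧ Set.InjOn G.s S ∧
      ∀ A, A ⊆ S → IsOpen A → IsOpen (G.s '' A) := by
  obtain ⟨φ, he, hφ⟩ := G.s_locHomeo e
  refine ⟨φ.source, φ.open_source, he, ?_, ?_⟩
  · rw [hφ]; exact φ.injOn
  · intro A hA hAo
    rw [hφ]
    exact φ.isOpen_image_of_subset_source hAo hA

end Aux

end TopGraph

namespace TopGraph

variable {V E : Type} [TopologicalSpace V] [TopologicalSpace E] (G : TopGraph V E)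

section Aux2

variable [T2Space V]

lemma exists_r_eq (hsg : G.sg = ∅) (v : V) : ∃ e, G.r e = v := by
  have hv : v ∈ G.rg := by
    have : v ∉ G.sg := by rw [hsg]; exact Set.notMem_empty v
    simpa [sg] using this
  obtain ⟨⟨N, hNo, hvN, hK⟩, hvsce⟩ := hv
  have hvcl : v ∈ closure (Set.range G.r) := by
    by_contra h
    exact hvsce (subset_closure (by simpa [sce] using h))
  by_contra h
  push_neg at h
  have hcl : IsClosed (G.r '' (G.r ⁻¹' closure N)) := (hK.image G.r_cont).isClosed
  have hvn : v ∈ N ∩ (G.r '' (G.r ⁻¹' closure N))ᶜ := by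
    refine ⟨hvN, ?_⟩
    rintro ⟨e, -, he⟩
    exact h e he
  have hopen : IsOpen (N ∩ (G.r '' (G.r ⁻¹' closure N))ᶜ) := hNo.inter hcl.isOpen_compl
  rw [mem_closure_iff] at hvcl
  obtain ⟨w, hw, e, rfl⟩ := hvcl _ hopen hvn
  exact hw.2 ⟨e, subset_closure hw.1, rfl⟩

lemma exists_path_from (hsg : G.sg = ∅) (v : V) : ∃ z : G.InfPath, G.r (z.1 0) = v := by
  have pick : ∀ w : V, ∃ e, G.r e = w := G.exists_r_eq hsg
  let f : V → E := fun w => (pick w).choose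
  have hf : ∀ w, G.r (f w) = w := fun w => (pick w).choose_spec
  let seq : ℕ → E := fun i => Nat.rec (f v) (fun _ e => f (G.s e)) i
  refine ⟨⟨seq, fun i => (hf _).symm⟩, hf v⟩

lemma injOn_shift_cyl (m : ℕ) (S : ℕ → Set E) (hS : ∀ i, Set.InjOn G.s (S i)) :
    Set.InjOn (G.shift^[m]) {z : G.InfPath | ∀ i < m, z.1 i ∈ S i} := by
  induction m generalizing S with
  | zero => intro z hz z' hz' h; simpa using h
  | succ m ih =>
    intro z hz z' hz' h
    have hsh : G.shift z = G.shift z' := by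
      refine ih (fun i => S (i+1)) (fun i => hS (i+1)) ?_ ?_ ?_
      · intro i hi
        exact hz (i+1) (by omega)
      · intro i hi
        exact hz' (i+1) (by omega)
      · rw [← Function.iterate_succ_apply, ← Function.iterate_succ_apply]
        exact h
    have h0 : z.1 0 = z'.1 0 := by
      apply hS 0 (hz 0 (by omega)) (hz' 0 (by omega))
      rw [z.2 0, z'.2 0]
      have : (G.shift z).1 0 = (G.shift z').1 0 := by rw [hsh]
      exact congrArg G.r this
    apply G.infPath_ext
    intro i
    cases i with
    | zero => exact h0
    | succ i =>
      have : (G.shift z).1 i = (G.shift z').1 i := by rw [hsh]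
      exact this

/-- Pull a coordinate of a path that is `n`-periodic from `l` down below `l + n`. -/
lemma per_pulldown {x : G.InfPath} {l n : ℕ} (hn : 0 < n)
    (hper : ∀ i, x.1 (i + (l + n)) = x.1 (i + l)) :
    ∀ b, l ≤ b → x.1 b = x.1 (l + (b - l) % n) := by
  intro b
  induction b using Nat.strong_induction_on with
  | _ b ihb =>
    intro hb
    by_cases hbs : b < l + n
    · have hmod : (b - l) % n = b - l := Nat.mod_eq_of_lt (by omega)
      rw [hmod]
      exact congrArg x.1 (by omega)
    · have h1 : x.1 b = x.1 (b - n) := by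
        have := hper (b - (l + n))
        have e1 : b - (l+n) + (l+n) = b := by omega
        have e2 : b - (l+n) + l = b - n := by omega
        rw [e1, e2] at this
        exact this
      rw [h1, ihb (b - n) (by omega) (by omega)]
      have hm : (b - l) % n = (b - n - l) % n := by
        conv_lhs => rw [show b - l = (b - n - l) + n by omega]
        rw [Nat.add_mod_right]
      rw [hm]

/-- periodicity propagates to later base points. -/
lemma per_ge {x : G.InfPath} {l n : ℕ}
    (hper : ∀ i, x.1 (i + (l + n)) = x.1 (i + l)) {b : ℕ} (hb : l ≤ b) :
    ∀ i, x.1 (i + (b + n)) = x.1 (i + b) := by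
  intro i
  have := hper (i + b - l)
  have e1 : i + b - l + (l + n) = i + (b + n) := by omega
  have e2 : i + b - l + l = i + b := by omega
  rw [e1, e2] at this
  exact this

/-- Lemma B: any infinite path whose range lies in an "entrance-free cycle"
neighbourhood is fully `n`-periodic. -/
lemma periodic_of_entranceFree {n : ℕ} (hn : 0 < n) {W : Set V}
    (hW : ∀ w ∈ W, ∃ γ : G.Path n, G.IsCycle hn γ ∧ ¬ G.HasEntrance γ ∧ G.pathRange hn γ = w)
    {z : G.InfPath} (hz : G.r (z.1 0) ∈ W) : ∀ i, z.1 (i + n) = z.1 i := by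
  obtain ⟨γ, hcyc, hent, hrange⟩ := hW _ hz
  have noEnt : ∀ (i : Fin n) (e : E), G.r e = G.r (γ.1 i) → e = γ.1 i := by
    intro i e hre
    by_contra hne
    exact hent ⟨i, e, hre, hne⟩
  have key : ∀ i, z.1 i = γ.1 ⟨i % n, Nat.mod_lt i hn⟩ := by
    intro i
    induction i with
    | zero =>
      apply noEnt
      have h0 : γ.1 ⟨0 % n, Nat.mod_lt 0 hn⟩ = γ.1 ⟨0, hn⟩ :=
        congrArg γ.1 (Fin.ext (Nat.zero_mod n))
      rw [h0]
      exact hrange.symm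
    | succ i ihi =>
      apply noEnt
      have h1 : G.r (z.1 (i+1)) = G.s (z.1 i) := (z.2 i).symm
      rw [h1, ihi]
      by_cases hc : i % n + 1 < n
      · have h2 := γ.2 (i % n) hc
        rw [h2]
        have hn2 : 1 % n = 1 := Nat.mod_eq_of_lt (by omega)
        have hmod : (i+1) % n = i % n + 1 := by
          rw [Nat.add_mod, hn2, Nat.mod_eq_of_lt hc]
        have e2 : (⟨i % n + 1, hc⟩ : Fin n) = ⟨(i+1) % n, Nat.mod_lt (i+1) hn⟩ :=
          Fin.ext hmod.symm
        rw [e2]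
      · have hlast : i % n = n - 1 := by
          have := Nat.mod_lt i hn
          omega
        have hmod0 : (i+1) % n = 0 := by
          by_cases hone : n = 1
          · simp [hone, Nat.mod_one]
          · rw [Nat.add_mod, Nat.mod_eq_of_lt (by omega : 1 < n), hlast,
              show n - 1 + 1 = n by omega, Nat.mod_self]
        have e1 : (⟨i % n, Nat.mod_lt i hn⟩ : Fin n) = ⟨n - 1, Nat.sub_lt hn Nat.one_pos⟩ :=
          Fin.ext hlast
        have e2 : (⟨(i+1) % n, Nat.mod_lt (i+1) hn⟩ : Fin n) = ⟨0, hn⟩ :=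
          Fin.ext hmod0
        rw [e1, e2]
        exact hcyc.symm
  intro i
  rw [key i, key (i + n)]
  apply congrArg γ.1
  apply Fin.ext
  show (i + n) % n = i % n
  exact Nat.add_mod_right i n

end Aux2

end TopGraph

namespace TopGraph

variable {V E : Type} [TopologicalSpace V] [TopologicalSpace E] (G : TopGraph V E)

section Aux3

variable [T2Space V]

/-- The generating family of the topology on `Γ(E^∞,σ)`. -/
def gens : Set (Set G.Gamma) :=
  {S | ∃ (U W : Set G.InfPath) (k l : ℕ), IsOpen U ∧ IsOpen W ∧
    Set.InjOn (G.shift^[k]) U ∧ Set.InjOn (G.shift^[l]) W ∧ S = G.basicSet U W k l}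

lemma isOpen_of_gens {S : Set G.Gamma} (hS : S ∈ G.gens) : IsOpen S :=
  TopologicalSpace.isOpen_generateFrom_of_mem hS

lemma exists_inj_nhd (x : G.InfPath) :
    ∃ S : ℕ → Set E, (∀ i, IsOpen (S i)) ∧ (∀ i, x.1 i ∈ S i) ∧
      (∀ i, Set.InjOn G.s (S i)) := by
  choose S h1 h2 h3 _ using fun i => G.exists_inj_source (x.1 i)
  exact ⟨S, h1, h2, h3⟩

lemma exists_basic_nhd (x : G.InfPath) (k : ℕ) :
    ∃ U : Set G.InfPath, IsOpen U ∧ x ∈ U ∧ Set.InjOn (G.shift^[k]) U := by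
  obtain ⟨S, h1, h2, h3⟩ := G.exists_inj_nhd x
  exact ⟨{z | ∀ i < k, z.1 i ∈ S i}, G.isOpen_cyl S h1 k, fun i _ => h2 i,
    G.injOn_shift_cyl k S h3⟩

lemma basic_inter_helper {U₁ W₁ U₂ W₂ : Set G.InfPath} {k₁ l₁ k₂ l₂ : ℕ}
    (hd : (k₁ : ℤ) - l₁ = (k₂ : ℤ) - l₂) (hl : l₁ ≤ l₂) :
    G.basicSet (U₁ ∩ U₂) (W₁ ∩ W₂) k₁ l₁ ⊆
      G.basicSet U₁ W₁ k₁ l₁ ∩ G.basicSet U₂ W₂ k₂ l₂ := by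
  rintro g ⟨⟨hU1, hU2⟩, ⟨hW1, hW2⟩, hp, hsh⟩
  have hk : k₁ ≤ k₂ := by omega
  refine ⟨⟨hU1, hW1, hp, hsh⟩, hU2, hW2, by omega, ?_⟩
  rw [shift_eq_iff] at hsh ⊢
  intro i
  have h1 := hsh (i + (l₂ - l₁))
  have e1 : i + (l₂ - l₁) + k₁ = i + k₂ := by omega
  have e2 : i + (l₂ - l₁) + l₁ = i + l₂ := by omega
  rw [e1, e2] at h1
  exact h1

lemma isBasis : TopologicalSpace.IsTopologicalBasis G.gens := by
  refine ⟨?_, ?_, rfl⟩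
  · rintro T₁ ⟨U₁, W₁, k₁, l₁, hU₁, hW₁, hiU₁, hiW₁, rfl⟩
      T₂ ⟨U₂, W₂, k₂, l₂, hU₂, hW₂, hiU₂, hiW₂, rfl⟩ g ⟨hg₁, hg₂⟩
    have hd : (k₁ : ℤ) - l₁ = (k₂ : ℤ) - l₂ := by
      rw [← hg₁.2.2.1, ← hg₂.2.2.1]
    rcases le_total l₁ l₂ with hl | hl
    · refine ⟨G.basicSet (U₁ ∩ U₂) (W₁ ∩ W₂) k₁ l₁,
        ⟨U₁ ∩ U₂, W₁ ∩ W₂, k₁, l₁, hU₁.inter hU₂, hW₁.inter hW₂,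
          hiU₁.mono Set.inter_subset_left, hiW₁.mono Set.inter_subset_left, rfl⟩,
        ⟨⟨hg₁.1, hg₂.1⟩, ⟨hg₁.2.1, hg₂.2.1⟩, hg₁.2.2.1, hg₁.2.2.2⟩,
        G.basic_inter_helper hd hl⟩
    · refine ⟨G.basicSet (U₂ ∩ U₁) (W₂ ∩ W₁) k₂ l₂,
        ⟨U₂ ∩ U₁, W₂ ∩ W₁, k₂, l₂, hU₂.inter hU₁, hW₂.inter hW₁,
          hiU₂.mono Set.inter_subset_left, hiW₂.mono Set.inter_subset_left, rfl⟩,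
        ⟨⟨hg₂.1, hg₁.1⟩, ⟨hg₂.2.1, hg₁.2.1⟩, hg₂.2.2.1, hg₂.2.2.2⟩, ?_⟩
      intro h hmem
      exact (G.basic_inter_helper hd.symm hl hmem).symm
  · rw [Set.sUnion_eq_univ_iff]
    intro g
    obtain ⟨k, l, hp, hsh⟩ := g.2
    obtain ⟨U, hUo, hxU, hUinj⟩ := G.exists_basic_nhd g.1.1 k
    obtain ⟨W, hWo, hyW, hWinj⟩ := G.exists_basic_nhd g.1.2.2 l
    exact ⟨G.basicSet U W k l, ⟨U, W, k, l, hUo, hWo, hUinj, hWinj, rfl⟩,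
      hxU, hyW, hp, hsh⟩

/-- Lemma A: a periodic point whose base point lies in `V_n` is in the interior
of the isotropy. -/
lemma mem_isoInterior_of_Vset {n : ℕ} (hn : 0 < n) (g : G.Gamma)
    (hxy : g.1.1 = g.1.2.2) (hp : g.1.2.1 = (n : ℤ)) {b : ℕ}
    (hper : ∀ i, g.1.1.1 (i + (b + n)) = g.1.1.1 (i + b))
    (hVb : G.r (g.1.1.1 b) ∈ G.Vset n hn) : g ∈ G.isoInterior := by
  obtain ⟨W, hWo, hWmem, hWcyc⟩ := hVb
  obtain ⟨S, hSo, hSmem, hSinj⟩ := G.exists_inj_nhd g.1.1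
  set U₀ : Set G.InfPath :=
    {z | ∀ i < b + n, z.1 i ∈ S i} ∩ (fun z : G.InfPath => G.r (z.1 b)) ⁻¹' W with hU₀
  have hU₀o : IsOpen U₀ :=
    (G.isOpen_cyl S hSo (b + n)).inter
      (hWo.preimage (G.r_cont.comp (G.continuous_coord b)))
  have hkey : ∀ z : G.InfPath, z ∈ U₀ → ∀ i, z.1 (i + (b + n)) = z.1 (i + b) := by
    intro z hz i
    have h0 : G.r ((G.shift^[b] z).1 0) ∈ W := by
      rw [G.shift_coord]
      simpa using hz.2
    have := G.periodic_of_entranceFree hn hWcyc h0 i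
    rw [G.shift_coord, G.shift_coord] at this
    calc z.1 (i + (b + n)) = z.1 (i + n + b) := congrArg z.1 (by omega)
      _ = z.1 (i + b) := this
  have injb : Set.InjOn (G.shift^[b]) U₀ := by
    apply (G.injOn_shift_cyl b S hSinj).mono
    intro z hz i hi
    exact hz.1 i (by omega)
  have injbn : Set.InjOn (G.shift^[b + n]) U₀ := by
    intro z hz z' hz' h
    apply injb hz hz'
    rw [shift_eq_iff] at h ⊢
    intro i
    rw [← hkey z hz i, ← hkey z' hz' i]
    exact h i
  have hsub : G.basicSet U₀ U₀ (b + n) b ⊆ G.isoSet := by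
    rintro g' ⟨h1, h2, _, h4⟩
    apply injb h1 h2
    rw [shift_eq_iff] at h4 ⊢
    intro i
    rw [← hkey _ h1 i]
    exact h4 i
  have hmemx : g.1.1 ∈ U₀ := ⟨fun i _ => hSmem i, hWmem⟩
  have hmem : g ∈ G.basicSet U₀ U₀ (b + n) b := by
    refine ⟨hmemx, ?_, ?_, ?_⟩
    · rw [← hxy]; exact hmemx
    · rw [hp]; push_cast; ring
    · rw [← hxy, shift_eq_iff]; exact hper
  exact interior_maximal hsub
    (G.isOpen_of_gens ⟨U₀, U₀, b + n, b, hU₀o, hU₀o, injbn, injb, rfl⟩) hmem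

end Aux3

end TopGraph

namespace TopGraph

variable {V E : Type} [TopologicalSpace V] [TopologicalSpace E] (G : TopGraph V E)

section Aux4

variable [T2Space V]

lemma step_lift (e : E) {O : Set E} (hO : O ∈ nhds e) :
    ∃ W₀ : Set V, IsOpen W₀ ∧ G.s e ∈ W₀ ∧ ∀ w ∈ W₀, ∃ e', e' ∈ O ∧ G.s e' = w := by
  obtain ⟨S, hSo, heS, _, hSim⟩ := G.exists_inj_source e
  refine ⟨G.s '' (S ∩ interior O), hSim _ Set.inter_subset_left (hSo.inter isOpen_interior),
    ⟨e, ⟨heS, mem_interior_iff_mem_nhds.2 hO⟩, rfl⟩, ?_⟩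
  rintro w ⟨e', ⟨_, he'⟩, rfl⟩
  exact ⟨e', interior_subset he', rfl⟩

lemma path_lift (c : ℕ → E) (m : ℕ) (hm : 0 < m)
    (hc : ∀ i, i + 1 < m → G.s (c i) = G.r (c (i+1)))
    (O : ℕ → Set E) (hO : ∀ i, i < m → O i ∈ nhds (c i)) :
    ∃ W₀ : Set V, IsOpen W₀ ∧ G.s (c (m-1)) ∈ W₀ ∧
      ∀ w ∈ W₀, ∃ e : ℕ → E, (∀ i < m, e i ∈ O i) ∧
        (∀ i, i + 1 < m → G.s (e i) = G.r (e (i+1))) ∧ G.s (e (m-1)) = w := by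
  induction m with
  | zero => omega
  | succ m ih =>
    by_cases hm0 : m = 0
    · subst hm0
      obtain ⟨W₀, h1, h2, h3⟩ := G.step_lift (c 0) (hO 0 (by omega))
      refine ⟨W₀, h1, h2, ?_⟩
      intro w hw
      obtain ⟨e', he', hse⟩ := h3 w hw
      refine ⟨fun _ => e', ?_, fun i hi => absurd hi (by omega), hse⟩
      intro i hi
      have h0 : i = 0 := by omega
      subst h0
      exact he'
    · have hm' : 0 < m := by omega
      obtain ⟨W₁, hW₁o, hW₁mem, hW₁⟩ :=
        ih hm' (fun i hi => hc i (by omega)) (fun i hi => hO i (by omega))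
      have hrc : G.r (c m) ∈ W₁ := by
        have h := hc (m-1) (by omega)
        rw [show m - 1 + 1 = m by omega] at h
        rw [← h]
        exact hW₁mem
      have hOm : O m ∩ G.r ⁻¹' W₁ ∈ nhds (c m) :=
        Filter.inter_mem (hO m (by omega))
          (G.r_cont.continuousAt.preimage_mem_nhds (hW₁o.mem_nhds hrc))
      obtain ⟨W₀, h1, h2, h3⟩ := G.step_lift (c m) hOm
      refine ⟨W₀, h1, h2, ?_⟩
      intro w hw
      obtain ⟨em, ⟨hemO, hemr⟩, hsem⟩ := h3 w hw
      obtain ⟨e', he'O, he'path, he's⟩ := hW₁ (G.r em) hemr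
      refine ⟨fun i => if i < m then e' i else em, ?_, ?_, ?_⟩
      · intro i hi
        by_cases h : i < m
        · simpa [h] using he'O i h
        · have hi' : i = m := by omega
          simp only [hi', if_neg (lt_irrefl m)]
          exact hemO
      · intro i hi
        by_cases h : i + 1 < m
        · have h' : i < m := by omega
          simp only [if_pos h', if_pos h]
          exact he'path i h
        · have h2' : i + 1 = m := by omega
          simp only [if_pos (by omega : i < m), if_neg (by omega : ¬ i + 1 < m)]
          have : i = m - 1 := by omega
          rw [this, he's]
      · simp only [Nat.add_sub_cancel, if_neg (lt_irrefl m)]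
        exact hsem

/-- Lemma C': points in an isotropy-interior-style basic set have base points in `V_n`. -/
lemma key_Vn (hsg : G.sg = ∅) {n l' : ℕ} (hn : 0 < n) {y : G.InfPath}
    {U' W' : Set G.InfPath} (hU' : U' ∈ nhds y) (hW' : W' ∈ nhds y)
    (hper : ∀ i, y.1 (i + (l' + n)) = y.1 (i + l'))
    (hstar : ∀ z z' : G.InfPath, z ∈ U' → z' ∈ W' →
      (∀ i, z.1 (i + (l' + n)) = z'.1 (i + l')) → z = z')
    (B : ℕ) : ∃ b, B ≤ b ∧ G.r (y.1 b) ∈ G.Vset n hn := by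
  obtain ⟨M₁, Uf, hUfo, hUfmem, hUfsub⟩ := G.cyl_of_nhds hU'
  obtain ⟨M₂, Wf, hWfo, hWfmem, hWfsub⟩ := G.cyl_of_nhds hW'
  set k := l' + n with hk
  set b := max B (max M₁ (max M₂ (l' + n + 1))) with hbdef
  have hbB : B ≤ b := by omega
  have hbM₁ : M₁ ≤ b := by omega
  have hbM₂ : M₂ ≤ b := by omega
  have hbk : k < b := by omega
  have hbl : l' < b := by omega
  -- lift of length k along y, with constraints Uf, for the "delayed" paths
  obtain ⟨W₁, hW₁o, hW₁mem, hW₁lift⟩ :=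
    G.path_lift y.1 k (by omega) (fun i _ => y.2 i) Uf
      (fun i _ => (hUfo i).mem_nhds (hUfmem i))
  have hsk : G.s (y.1 (k-1)) = G.r (y.1 k) := by
    have h := y.2 (k-1)
    rw [show k - 1 + 1 = k by omega] at h
    exact h
  have hky : y.1 k = y.1 l' := by
    have h := hper 0
    simpa using h
  have hW₁r : G.r (y.1 l') ∈ W₁ := by
    rw [← hky, ← hsk]
    exact hW₁mem
  -- constraints for the main prefix lift of length b along y
  set O'' : ℕ → Set E := fun j =>
    Wf j ∩ (if l' ≤ j then Uf (j + n) else Set.univ) ∩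
      (if j = l' then G.r ⁻¹' W₁ else Set.univ) with hO''def
  have hO''nhds : ∀ j, j < b → O'' j ∈ nhds (y.1 j) := by
    intro j _
    refine Filter.inter_mem (Filter.inter_mem ((hWfo j).mem_nhds (hWfmem j)) ?_) ?_
    · by_cases hj : l' ≤ j
      · rw [if_pos hj]
        have h := G.per_ge hper hj 0
        simp only [Nat.zero_add] at h
        refine (hUfo (j + n)).mem_nhds ?_
        rw [← h]
        exact hUfmem (j + n)
      · rw [if_neg hj]
        exact Filter.univ_mem
    · by_cases hj : j = l'
      · subst hj
        rw [if_pos rfl]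
        exact G.r_cont.continuousAt.preimage_mem_nhds (hW₁o.mem_nhds hW₁r)
      · rw [if_neg hj]
        exact Filter.univ_mem
  obtain ⟨W₀, hW₀o, hW₀mem, hW₀lift⟩ :=
    G.path_lift y.1 b (by omega) (fun i _ => y.2 i) O'' hO''nhds
  have hW₀r : G.r (y.1 b) ∈ W₀ := by
    have h := y.2 (b-1)
    rw [show b - 1 + 1 = b by omega] at h
    rw [← h]
    exact hW₀mem
  refine ⟨b, hbB, W₀, hW₀o, hW₀r, ?_⟩
  intro w hw
  obtain ⟨e, heO, hepath, hes⟩ := hW₀lift w hw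
  obtain ⟨f, hf0⟩ := G.exists_path_from hsg w
  -- the infinite path y'' through w at position b
  set ydd : ℕ → E := fun m => if m < b then e m else f.1 (m - b) with hydd
  have hyddpath : ∀ i, G.s (ydd i) = G.r (ydd (i+1)) := by
    intro i
    by_cases h1 : i + 1 < b
    · simp only [hydd, if_pos (by omega : i < b), if_pos h1]
      exact hepath i h1
    · by_cases h2 : i + 1 = b
      · simp only [hydd, if_pos (by omega : i < b), if_neg (by omega : ¬ i + 1 < b)]
        rw [show i + 1 - b = 0 by omega, hf0, show i = b - 1 by omega]
        exact hes
      · simp only [hydd, if_neg (by omega : ¬ i < b), if_neg (by omega : ¬ i + 1 < b)]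
        have h := f.2 (i - b)
        rw [show i - b + 1 = i + 1 - b by omega] at h
        exact h
  set Y'' : G.InfPath := ⟨ydd, hyddpath⟩ with hY''
  have hyddeq : ∀ m, m < b → ydd m = e m := by
    intro m hm
    simp only [hydd, if_pos hm]
  have hY''W' : Y'' ∈ W' := by
    apply hWfsub
    intro i hi
    show ydd i ∈ Wf i
    rw [hyddeq i (by omega)]
    exact (heO i (by omega)).1.1
  -- the delayed path y'
  have hrel : G.r (e l') ∈ W₁ := by
    have h := (heO l' (by omega)).2
    rw [if_pos rfl] at h
    exact h
  obtain ⟨e', he'O, he'path, he's⟩ := hW₁lift (G.r (e l')) hrel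
  have mk_delay : ∀ (zd : ℕ → E) (hzd : ∀ i, G.s (zd i) = G.r (zd (i+1)))
      (hzl : zd l' = e l'),
      ∃ Z : G.InfPath, (∀ m, Z.1 m = if m < k then e' m else zd (m - n)) := by
    intro zd hzd hzl
    have hpath : ∀ i, G.s ((fun m => if m < k then e' m else zd (m - n)) i)
        = G.r ((fun m => if m < k then e' m else zd (m - n)) (i+1)) := by
      intro i
      by_cases h1 : i + 1 < k
      · simp only [if_pos (by omega : i < k), if_pos h1]
        exact he'path i h1
      · by_cases h2 : i + 1 = k
        · simp only [if_pos (by omega : i < k), if_neg (by omega : ¬ i + 1 < k)]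
          rw [show i + 1 - n = l' by omega, hzl, show i = k - 1 by omega]
          exact he's
        · simp only [if_neg (by omega : ¬ i < k), if_neg (by omega : ¬ i + 1 < k)]
          have h := hzd (i - n)
          rw [show i - n + 1 = i + 1 - n by omega] at h
          exact h
    exact ⟨⟨_, hpath⟩, fun m => rfl⟩
  obtain ⟨Y', hY'c⟩ := mk_delay ydd hyddpath (hyddeq l' (by omega))
  have hY'U' : Y' ∈ U' := by
    apply hUfsub
    intro i hi
    rw [hY'c i]
    by_cases h : i < k
    · rw [if_pos h]
      exact he'O i h
    · rw [if_neg h]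
      have h2 := (heO (i - n) (by omega)).1.2
      rw [if_pos (by omega : l' ≤ i - n)] at h2
      rw [hyddeq (i - n) (by omega)]
      rw [show i - n + n = i by omega] at h2
      exact h2
  have hshift : ∀ i, Y'.1 (i + (l' + n)) = Y''.1 (i + l') := by
    intro i
    rw [hY'c (i + (l' + n)), if_neg (by omega : ¬ i + (l' + n) < k)]
    show ydd (i + (l' + n) - n) = ydd (i + l')
    exact congrArg ydd (by omega)
  have heq : Y' = Y'' := hstar Y' Y'' hY'U' hY''W' hshift
  have hperY'' : ∀ i, Y''.1 (i + (l' + n)) = Y''.1 (i + l') := by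
    intro i
    exact (congrArg (fun Z : G.InfPath => Z.1 (i + (l' + n))) heq.symm).trans (hshift i)
  refine ⟨G.segment Y'' b n, ?_, ?_, ?_⟩
  · -- IsCycle
    show G.r (Y''.1 (b + 0)) = G.s (Y''.1 (b + (n - 1)))
    have h1 : G.s (Y''.1 (b + (n-1))) = G.r (Y''.1 (b + n)) := by
      have h := Y''.2 (b + (n-1))
      rw [show b + (n-1) + 1 = b + n by omega] at h
      exact h
    have h2 : Y''.1 (b + n) = Y''.1 (b + 0) := by
      have h := G.per_ge hperY'' (by omega : l' ≤ b) 0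
      simp only [Nat.zero_add] at h
      refine h.trans ?_
      exact congrArg ydd (by omega)
    rw [h1, h2]
  · -- no entrance
    rintro ⟨i, eE, hre, hne⟩
    have hδ : (G.segment Y'' b n).1 i = Y''.1 (b + ↑i) := rfl
    rw [hδ] at hre hne
    obtain ⟨fE, hfE0⟩ := G.exists_path_from hsg (G.s eE)
    set yt : ℕ → E := fun m => if m < b + ↑i then ydd m
      else if m = b + ↑i then eE else fE.1 (m - (b + ↑i + 1)) with hyt
    have hytpath : ∀ m, G.s (yt m) = G.r (yt (m+1)) := by
      intro m
      by_cases h1 : m + 1 < b + ↑i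
      · simp only [hyt, if_pos (by omega : m < b + ↑i), if_pos h1]
        exact hyddpath m
      · by_cases h2 : m + 1 = b + ↑i
        · simp only [hyt, if_pos (by omega : m < b + ↑i), if_neg (by omega : ¬ m + 1 < b + ↑i),
            if_pos h2]
          rw [show G.r eE = G.r (ydd (b + ↑i)) from hre, ← h2]
          exact hyddpath m
        · by_cases h3 : m = b + ↑i
          · simp only [hyt, if_neg (by omega : ¬ m < b + ↑i), if_pos h3,
              if_neg (by omega : ¬ m + 1 < b + ↑i), if_neg (by omega : ¬ m + 1 = b + ↑i)]
            rw [show m + 1 - (b + ↑i + 1) = 0 by omega, hfE0]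
          · simp only [hyt, if_neg (by omega : ¬ m < b + ↑i), if_neg h3,
              if_neg (by omega : ¬ m + 1 < b + ↑i), if_neg (by omega : ¬ m + 1 = b + ↑i)]
            have h := fE.2 (m - (b + ↑i + 1))
            rw [show m - (b + ↑i + 1) + 1 = m + 1 - (b + ↑i + 1) by omega] at h
            exact h
    set Yt : G.InfPath := ⟨yt, hytpath⟩ with hYt
    have hytydd : ∀ m, m < b + ↑i → yt m = ydd m := by
      intro m hm
      simp only [hyt, if_pos hm]
    have hYtW' : Yt ∈ W' := by
      apply hWfsub
      intro j hj
      show yt j ∈ Wf j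
      rw [hytydd j (by omega), hyddeq j (by omega)]
      exact (heO j (by omega)).1.1
    have hytl : yt l' = e l' := by
      rw [hytydd l' (by omega)]
      exact hyddeq l' (by omega)
    obtain ⟨Yt', hYt'c⟩ := mk_delay yt hytpath hytl
    have hYt'U' : Yt' ∈ U' := by
      apply hUfsub
      intro j hj
      rw [hYt'c j]
      by_cases h : j < k
      · rw [if_pos h]
        exact he'O j h
      · rw [if_neg h]
        have h2 := (heO (j - n) (by omega)).1.2
        rw [if_pos (by omega : l' ≤ j - n)] at h2
        rw [hytydd (j - n) (by omega), hyddeq (j - n) (by omega)]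
        rw [show j - n + n = j by omega] at h2
        exact h2
    have hshiftt : ∀ j, Yt'.1 (j + (l' + n)) = Yt.1 (j + l') := by
      intro j
      rw [hYt'c (j + (l' + n)), if_neg (by omega : ¬ j + (l' + n) < k)]
      show yt (j + (l' + n) - n) = yt (j + l')
      exact congrArg yt (by omega)
    have heqt : Yt' = Yt := hstar Yt' Yt hYt'U' hYtW' hshiftt
    -- evaluate at position b + i
    have hcontr : eE = ydd (b + ↑i) := by
      have h1 : Yt.1 (b + ↑i) = eE := by
        show yt (b + ↑i) = eE
        simp only [hyt]
        rw [if_neg (by omega : ¬ b + ↑i < b + ↑i)]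
        simp
      have h2 : Yt'.1 (b + ↑i) = yt (b + ↑i - n) := by
        rw [hYt'c (b + ↑i)]
        rw [if_neg (by omega : ¬ b + ↑i < k)]
      have h3 : yt (b + ↑i - n) = ydd (b + ↑i - n) := hytydd _ (by omega)
      have h4 : ydd (b + ↑i - n) = ydd (b + ↑i) := by
        have h := hperY'' (b + ↑i - (l' + n))
        show Y''.1 (b + ↑i - n) = Y''.1 (b + ↑i)
        rw [show b + ↑i - n = b + ↑i - (l' + n) + l' by omega, ← h]
        exact congrArg Y''.1 (by omega)
      rw [← h1, ← heqt, h2, h3, h4]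
    exact hne (hcontr.trans rfl)
  · -- pathRange = w
    show G.r (Y''.1 (b + 0)) = w
    have h : ydd (b + 0) = f.1 0 := by
      simp only [hydd]
      rw [if_neg (by omega : ¬ b + 0 < b)]
      exact congrArg f.1 (by omega)
    show G.r (ydd (b + 0)) = w
    rw [h, hf0]

end Aux4

end TopGraph

namespace TopGraph

variable {V E : Type} [TopologicalSpace V] [TopologicalSpace E] (G : TopGraph V E)

section Aux5

variable [T2Space V]

/-- Inversion on the groupoid. -/
def ginv (g : G.Gamma) : G.Gamma :=
  ⟨(g.1.2.2, -g.1.2.1, g.1.1), by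
    obtain ⟨k, l, h1, h2⟩ := g.2
    exact ⟨l, k, by rw [h1]; ring, h2.symm⟩⟩

lemma ginv_ginv (g : G.Gamma) : G.ginv (G.ginv g) = g := by
  apply Subtype.ext
  show (g.1.1, - - g.1.2.1, g.1.2.2) = g.1
  rw [neg_neg]

lemma continuous_ginv : Continuous G.ginv := by
  apply continuous_generateFrom_iff.mpr
  rintro S ⟨U, W, k, l, hU, hW, hiU, hiW, rfl⟩
  have hpre : G.ginv ⁻¹' G.basicSet U W k l = G.basicSet W U l k := by
    ext g
    constructor
    · rintro ⟨h1, h2, h3, h4⟩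
      have h3' : -g.1.2.1 = (k : ℤ) - l := h3
      exact ⟨h2, h1, by omega, h4.symm⟩
    · rintro ⟨h1, h2, h3, h4⟩
      refine ⟨h2, h1, show -g.1.2.1 = (k : ℤ) - l by omega, h4.symm⟩
  rw [hpre]
  exact G.isOpen_of_gens ⟨W, U, l, k, hW, hU, hiW, hiU, rfl⟩

lemma ginv_preimage_isoSet : G.ginv ⁻¹' G.isoSet = G.isoSet := by
  ext g
  constructor
  · intro h
    exact (h : g.1.2.2 = g.1.1).symm
  · intro h
    exact (h : g.1.1 = g.1.2.2).symm

lemma ginv_mem_isoInterior {g : G.Gamma} (h : g ∈ G.isoInterior) :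
    G.ginv g ∈ G.isoInterior := by
  have h2 : G.ginv ⁻¹' interior G.isoSet ⊆ interior (G.ginv ⁻¹' G.isoSet) :=
    preimage_interior_subset_interior_preimage G.continuous_ginv
  have h3 : G.ginv g ∈ G.ginv ⁻¹' interior G.isoSet := by
    rw [Set.mem_preimage, G.ginv_ginv]
    exact h
  have h4 := h2 h3
  rw [G.ginv_preimage_isoSet] at h4
  exact h4

/-- The positive-cocycle case of the main theorem. -/
lemma compl_nhd_pos (hsg : G.sg = ∅)
    (hV : ∀ (n : ℕ) (hn : 0 < n), IsClosed (G.Vset n hn)) {g : G.Gamma} {n : ℕ} (hn : 0 < n)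
    (hxy : g.1.1 = g.1.2.2) (hp : g.1.2.1 = (n : ℤ)) (hg : g ∉ G.isoInterior) :
    ∃ O : Set G.Gamma, IsOpen O ∧ g ∈ O ∧ O ∩ G.isoInterior = ∅ := by
  obtain ⟨k₀, l, hp0, hsh0⟩ := g.2
  have hk0 : k₀ = l + n := by omega
  subst hk0
  rw [← hxy] at hsh0
  have hper : ∀ i, g.1.1.1 (i + (l + n)) = g.1.1.1 (i + l) := (shift_eq_iff G).mp hsh0
  have hnot : ∀ j, j < n → G.r (g.1.1.1 (l + j)) ∉ G.Vset n hn := by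
    intro j hj hmem
    apply hg
    refine G.mem_isoInterior_of_Vset hn g hxy hp (b := l + j) ?_ hmem
    intro i
    calc g.1.1.1 (i + (l + j + n)) = g.1.1.1 ((i + j) + (l + n)) := congrArg _ (by omega)
      _ = g.1.1.1 ((i + j) + l) := hper (i + j)
      _ = g.1.1.1 (i + (l + j)) := congrArg _ (by omega)
  obtain ⟨S, hSo, hSmem, hSinj⟩ := G.exists_inj_nhd g.1.1
  set Z := (G.Vset n hn)ᶜ with hZ
  have hZo : IsOpen Z := (hV n hn).isOpen_compl
  set U : Set G.InfPath := {z | ∀ i < l + n, z.1 i ∈ S i} ∩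
    ⋂ j ∈ Finset.range n, (fun z : G.InfPath => G.r (z.1 (l + j))) ⁻¹' Z with hUdef
  set W : Set G.InfPath := {z | ∀ i < l, z.1 i ∈ S i} with hWdef
  have hUo : IsOpen U := (G.isOpen_cyl S hSo (l + n)).inter
    (isOpen_biInter_finset fun j _ =>
      hZo.preimage (G.r_cont.comp (G.continuous_coord (l + j))))
  have hWo : IsOpen W := G.isOpen_cyl S hSo l
  have hUinj : Set.InjOn (G.shift^[l + n]) U :=
    (G.injOn_shift_cyl (l + n) S hSinj).mono Set.inter_subset_left
  have hWinj : Set.InjOn (G.shift^[l]) W := G.injOn_shift_cyl l S hSinj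
  have hxU : g.1.1 ∈ U := by
    refine ⟨fun i _ => hSmem i, ?_⟩
    apply Set.mem_iInter₂.2
    intro j hj
    exact hnot j (Finset.mem_range.mp hj)
  refine ⟨G.basicSet U W (l + n) l,
    G.isOpen_of_gens ⟨U, W, l + n, l, hUo, hWo, hUinj, hWinj, rfl⟩,
    ⟨hxU, by rw [← hxy]; exact fun i _ => hSmem i, hp0, by rw [← hxy]; exact hsh0⟩, ?_⟩
  rw [Set.eq_empty_iff_forall_notMem]
  rintro h ⟨⟨hhU, hhW, hhp, hhsh⟩, hIso⟩
  have hxy' : h.1.1 = h.1.2.2 := (show h ∈ G.isoSet from interior_subset hIso)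
  rw [← hxy'] at hhsh
  have hperh : ∀ i, h.1.1.1 (i + (l + n)) = h.1.1.1 (i + l) := (shift_eq_iff G).mp hhsh
  -- extract a basic set inside the isotropy around h
  have hnhds : G.isoSet ∈ nhds h := mem_interior_iff_mem_nhds.mp hIso
  obtain ⟨T, hTgens, hhT, hTsub⟩ := G.isBasis.mem_nhds_iff.mp hnhds
  obtain ⟨U', W', k', l'', hU'o, hW'o, _, _, rfl⟩ := hTgens
  obtain ⟨hhU', hhW', hhp', hhsh'⟩ := hhT
  have hk' : k' = l'' + n := by
    rw [hhp] at hhp'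
    omega
  subst hk'
  rw [← hxy'] at hhsh' hhW'
  have hperh' : ∀ i, h.1.1.1 (i + (l'' + n)) = h.1.1.1 (i + l'') := (shift_eq_iff G).mp hhsh'
  have hstar : ∀ z z' : G.InfPath, z ∈ U' → z' ∈ W' →
      (∀ i, z.1 (i + (l'' + n)) = z'.1 (i + l'')) → z = z' := by
    intro z z' hz hz' hcoord
    have helt : (⟨(z, (n : ℤ), z'), l'' + n, l'', by push_cast; ring,
        (shift_eq_iff G).mpr hcoord⟩ : G.Gamma) ∈ G.basicSet U' W' (l'' + n) l'' :=
      ⟨hz, hz', by push_cast; ring, (shift_eq_iff G).mpr hcoord⟩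
    exact hTsub helt
  obtain ⟨b, hbl, hbV⟩ := G.key_Vn hsg hn (hU'o.mem_nhds hhU') (hW'o.mem_nhds hhW')
    hperh' hstar l
  have hpull := G.per_pulldown hn hperh b hbl
  rw [hpull] at hbV
  have hj : (b - l) % n < n := Nat.mod_lt _ hn
  have := Set.mem_iInter₂.1 hhU.2 ((b - l) % n) (Finset.mem_range.mpr hj)
  exact this hbV

end Aux5

end TopGraph

/-- Theorem 3.8, final claim: if every `V_n` is closed then `Iso(Γ(E^∞,σ))°` is closed. -/
theorem stmt5 {V E : Type} [TopologicalSpace V] [TopologicalSpace E]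
    [T2Space V] [T2Space E] [LocallyCompactSpace V] [LocallyCompactSpace E]
    [SecondCountableTopology V] [SecondCountableTopology E]
    (G : TopGraph V E)
    (hsg : G.sg = ∅) (hV : ∀ (n : ℕ) (hn : 0 < n), IsClosed (G.Vset n hn)) :
    IsClosed G.isoInterior := by
  haveI : T2Space G.InfPath :=
    inferInstanceAs (T2Space {x : ℕ → E // ∀ i : ℕ, G.s (x i) = G.r (x (i + 1))})
  rw [← isOpen_compl_iff, isOpen_iff_forall_mem_open]
  intro g hg
  by_cases hxy : g.1.1 = g.1.2.2
  · rcases lt_trichotomy g.1.2.1 0 with hneg | h0 | hpos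
    · -- negative cocycle: reduce to the positive case via inversion
      have hginv_not : G.ginv g ∉ G.isoInterior := by
        intro hmem
        apply hg
        have := G.ginv_mem_isoInterior hmem
        rwa [G.ginv_ginv] at this
      set n := (-g.1.2.1).toNat with hndef
      have hn : 0 < n := by omega
      have hxy' : (G.ginv g).1.1 = (G.ginv g).1.2.2 := hxy.symm
      have hp' : (G.ginv g).1.2.1 = (n : ℤ) := by
        show -g.1.2.1 = (n : ℤ)
        omega
      obtain ⟨O', hO'o, hO'mem, hO'dis⟩ :=
        G.compl_nhd_pos hsg hV hn hxy' hp' hginv_not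
      refine ⟨G.ginv ⁻¹' O', ?_, hO'o.preimage G.continuous_ginv, hO'mem⟩
      intro h hh
      intro hIso
      have : G.ginv h ∈ O' ∩ G.isoInterior := ⟨hh, G.ginv_mem_isoInterior hIso⟩
      rw [hO'dis] at this
      exact this
    · -- zero cocycle with equal endpoints: g is in the interior, contradiction
      exfalso
      apply hg
      have hmem : g ∈ G.basicSet Set.univ Set.univ 0 0 := by
        refine ⟨trivial, trivial, by omega, ?_⟩
        simpa using hxy
      have hsub : G.basicSet Set.univ Set.univ 0 0 ⊆ G.isoSet := by
        rintro g' ⟨-, -, -, h4⟩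
        exact (by simpa using h4 : g'.1.1 = g'.1.2.2)
      have hopen : IsOpen (G.basicSet Set.univ Set.univ 0 0) :=
        G.isOpen_of_gens ⟨Set.univ, Set.univ, 0, 0, isOpen_univ, isOpen_univ,
          fun a _ b _ h => by simpa using h, fun a _ b _ h => by simpa using h, rfl⟩
      exact interior_maximal hsub hopen hmem
    · -- positive cocycle
      set n := g.1.2.1.toNat with hndef
      have hn : 0 < n := by omega
      have hp : g.1.2.1 = (n : ℤ) := by omega
      obtain ⟨O, hOo, hOmem, hOdis⟩ := G.compl_nhd_pos hsg hV hn hxy hp hg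
      refine ⟨O, ?_, hOo, hOmem⟩
      intro h hh hIso
      have : h ∈ O ∩ G.isoInterior := ⟨hh, hIso⟩
      rw [hOdis] at this
      exact this
  · -- distinct endpoints: separate them
    obtain ⟨k, l, hp, hsh⟩ := g.2
    obtain ⟨A, Bop, hAo, hBo, hxA, hyB, hAB⟩ := t2_separation hxy
    obtain ⟨U₁, hU₁o, hxU₁, hU₁inj⟩ := G.exists_basic_nhd g.1.1 k
    obtain ⟨W₁, hW₁o, hyW₁, hW₁inj⟩ := G.exists_basic_nhd g.1.2.2 l
    refine ⟨G.basicSet (A ∩ U₁) (Bop ∩ W₁) k l, ?_,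
      G.isOpen_of_gens ⟨A ∩ U₁, Bop ∩ W₁, k, l, hAo.inter hU₁o, hBo.inter hW₁o,
        hU₁inj.mono Set.inter_subset_right, hW₁inj.mono Set.inter_subset_right, rfl⟩,
      ⟨⟨hxA, hxU₁⟩, ⟨hyB, hyW₁⟩, hp, hsh⟩⟩
    rintro h ⟨hhU, hhW, -, -⟩ hIso
    have hxyh : h.1.1 = h.1.2.2 := (show h ∈ G.isoSet from interior_subset hIso)
    exact Set.disjoint_left.mp hAB hhU.1 (hxyh ▸ hhW.1)
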